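/- Let α < 0 and let X be a non-negative absolutely continuous random variable with cumulative distribution function F, differentiable on (0, +∞) with derivative f, satisfying 0 < F(x) < 1 for all x > 0, lim_{x→0⁺} F(x) = 0 and lim_{x→+∞} F(x) = 1. Then for every a > 0 the α-generalized reversed aging intensity L̆_α of X satisfies: (1) 0 ≤ L̆_α(x) < +∞ for all x > 0; (2) lim_{x→0⁺} ∫_x^a L̆_α(t)/t dt = +∞; (3) lim_{x→+∞} ∫_a^x L̆_α(t)/t dt = +∞. -/

import Mathlib

/-- The α-generalized reversed aging intensity function. -/
noncomputable def genRAI (F f : ℝ → ℝ) (α x : ℝ) : ℝ :=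
  if α = 0 then -(x * f x) / (F x * Real.log (F x))
  else α * x * F x ^ (α - 1) * f x / (1 - F x ^ α)

open Filter Set MeasureTheory intervalIntegral in
/-- For `α < 0`, the α-generalized reversed aging intensity `L̆_α` of a non-negative
absolutely continuous random variable satisfies: (1) `0 ≤ L̆_α(x) < ∞` for all `x > 0`;
(2) `∫_x^a L̆_α(t)/t dt → +∞` as `x → 0⁺`; (3) `∫_a^x L̆_α(t)/t dt → +∞` as `x → +∞`. -/
theorem stmt_4 (α : ℝ) (hα : α < 0) (F f : ℝ → ℝ)
    (hmono : Monotone F)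
    (hd : ∀ x ∈ Set.Ioi (0:ℝ), HasDerivAt F (f x) x)
    (hF : ∀ x ∈ Set.Ioi (0:ℝ), 0 < F x ∧ F x < 1)
    (hfi : ∀ u v : ℝ, 0 < u → 0 < v → IntervalIntegrable f MeasureTheory.volume u v)
    (hF0 : Filter.Tendsto F (nhdsWithin (0:ℝ) (Set.Ioi 0)) (nhds 0))
    (hF1 : Filter.Tendsto F Filter.atTop (nhds 1))
    (a : ℝ) (ha : 0 < a) :
    (∀ x > (0:ℝ), 0 ≤ genRAI F f α x) ∧
    Filter.Tendsto (fun x => ∫ t in x..a, genRAI F f α t / t)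
      (nhdsWithin (0:ℝ) (Set.Ioi 0)) Filter.atTop ∧
    Filter.Tendsto (fun x => ∫ t in a..x, genRAI F f α t / t)
      Filter.atTop Filter.atTop := by
  have hα0 : α ≠ 0 := ne_of_lt hα
  -- basic facts
  have hf0 : ∀ x ∈ Set.Ioi (0:ℝ), 0 ≤ f x := by
    intro x hx
    have h1 : Tendsto (slope F x) (nhdsWithin x {x}ᶜ) (nhds (f x)) :=
      hasDerivAt_iff_tendsto_slope.mp (hd x hx)
    refine ge_of_tendsto' h1 fun y => ?_
    rw [slope_def_field]
    rcases le_total x y with h | h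
    · exact div_nonneg (by simpa using hmono h) (by simpa using h)
    · rw [div_nonneg_iff]
      right
      constructor
      · simpa using hmono h
      · simpa using h
  have hFpow : ∀ x ∈ Set.Ioi (0:ℝ), 1 < F x ^ α := by
    intro x hx
    rw [Real.one_lt_rpow_iff_of_pos (hF x hx).1]
    exact Or.inr ⟨(hF x hx).2, hα⟩
  -- nonnegativity
  have hnn : ∀ x > (0:ℝ), 0 ≤ genRAI F f α x := by
    intro x hx
    rw [genRAI, if_neg hα0]
    rw [div_nonneg_iff]
    right
    constructor
    · have h1 : 0 ≤ x * F x ^ (α - 1) * f x :=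
        mul_nonneg (mul_nonneg (le_of_lt hx) (Real.rpow_nonneg (hF x hx).1.le _)) (hf0 x hx)
      calc α * x * F x ^ (α - 1) * f x = α * (x * F x ^ (α - 1) * f x) := by ring
        _ ≤ 0 := mul_nonpos_of_nonpos_of_nonneg hα.le h1
    · linarith [hFpow x hx]
  -- the antiderivative
  set g : ℝ → ℝ := fun t => -Real.log (F t ^ α - 1) with hg
  have hderiv : ∀ t ∈ Set.Ioi (0:ℝ), HasDerivAt g (genRAI F f α t / t) t := by
    intro t ht
    have hFt := hF t ht
    have h1 : HasDerivAt (fun s => F s ^ α - 1) (f t * α * F t ^ (α - 1)) t :=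
      ((hd t ht).rpow_const (Or.inl hFt.1.ne')).sub_const 1
    have hne : F t ^ α - 1 ≠ 0 := by have := hFpow t ht; linarith
    have h2 : HasDerivAt (fun y => -Real.log (F y ^ α - 1)) _ t := (h1.log hne).neg
    convert h2 using 1
    rw [genRAI, if_neg hα0]
    have htne : (t:ℝ) ≠ 0 := (ne_of_gt ht)
    have h3 : (1 : ℝ) - F t ^ α ≠ 0 := by have := hFpow t ht; linarith
    field_simp
    ring
  -- integrability of the integrand on positive intervals
  have hint : ∀ u v : ℝ, 0 < u → 0 < v →
      IntervalIntegrable (fun t => genRAI F f α t / t) volume u v := by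
    intro u v hu hv
    have hsub : Set.uIcc u v ⊆ Set.Ioi (0:ℝ) := by
      intro y hy
      exact lt_of_lt_of_le (lt_min hu hv) hy.1
    have hcF : ContinuousOn F (Set.uIcc u v) := fun y hy =>
      ((hd y (hsub hy)).continuousAt).continuousWithinAt
    have hc : ContinuousOn (fun t => α * F t ^ (α - 1) / (1 - F t ^ α)) (Set.uIcc u v) := by
      apply ContinuousOn.div
      · exact continuousOn_const.mul
          (hcF.rpow_const fun y hy => Or.inl (hF y (hsub hy)).1.ne')
      · exact continuousOn_const.sub
          (hcF.rpow_const fun y hy => Or.inl (hF y (hsub hy)).1.ne')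
      · intro y hy
        have := hFpow y (hsub hy); intro h; linarith
    have := (hfi u v hu hv).mul_continuousOn hc
    apply this.congr
    intro y hy
    dsimp only
    have hy' : y ∈ Set.Ioi (0:ℝ) := lt_of_lt_of_le (lt_min hu hv) hy.1.le
    have hyne : y ≠ 0 := ne_of_gt hy'
    rw [genRAI, if_neg hα0]
    have h3 : (1 : ℝ) - F y ^ α ≠ 0 := by have := hFpow y hy'; linarith
    field_simp
  -- FTC on positive intervals
  have hftc : ∀ u v : ℝ, 0 < u → 0 < v →
      (∫ t in u..v, genRAI F f α t / t) = g v - g u := by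
    intro u v hu hv
    apply integral_eq_sub_of_hasDerivAt
    · intro t ht
      exact hderiv t (lt_of_lt_of_le (lt_min hu hv) ht.1)
    · exact hint u v hu hv
  -- limit of g at 0+
  have hgtop : Tendsto g (nhdsWithin (0:ℝ) (Set.Ioi 0)) atBot := by
    have h1 : Tendsto (fun t => F t ^ α) (nhdsWithin (0:ℝ) (Set.Ioi 0)) atTop := by
      have h2 : Tendsto (fun y : ℝ => y ^ α) (nhdsWithin (0:ℝ) (Set.Ioi 0)) atTop := by
        have h3 : Tendsto (fun y : ℝ => Real.exp (Real.log y * α))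
            (nhdsWithin (0:ℝ) (Set.Ioi 0)) atTop :=
          Real.tendsto_exp_atTop.comp
            (Real.tendsto_log_nhdsGT_zero.atBot_mul_const_of_neg hα)
        apply h3.congr'
        filter_upwards [self_mem_nhdsWithin] with y hy
        rw [Real.rpow_def_of_pos hy]
      have hmem : ∀ᶠ t in nhdsWithin (0:ℝ) (Set.Ioi 0), F t ∈ Set.Ioi (0:ℝ) := by
        filter_upwards [self_mem_nhdsWithin] with t ht
        exact (hF t ht).1
      exact h2.comp (tendsto_nhdsWithin_iff.mpr ⟨hF0, hmem⟩)
    have h4 : Tendsto (fun t => F t ^ α - 1) (nhdsWithin (0:ℝ) (Set.Ioi 0)) atTop := by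
      simpa [sub_eq_add_neg] using tendsto_atTop_add_const_right _ (-1:ℝ) h1
    exact tendsto_neg_atTop_atBot.comp (Real.tendsto_log_atTop.comp h4)
  -- limit of g at ∞
  have hgbot : Tendsto g atTop atTop := by
    have h1 : Tendsto (fun t => F t ^ α - 1) atTop (nhds 0) := by
      have h2 : Tendsto (fun t => F t ^ α) atTop (nhds 1) := by
        have := (Real.continuousAt_rpow_const 1 α (Or.inl one_ne_zero)).tendsto.comp hF1
        simpa [Function.comp_def] using this
      have := h2.sub (tendsto_const_nhds (x := (1:ℝ)))
      simpa using this
    have hmem : ∀ᶠ t in (atTop : Filter ℝ), F t ^ α - 1 ∈ {x : ℝ | x ≠ 0} := by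
      filter_upwards [eventually_gt_atTop 0] with t ht
      have := hFpow t ht
      simp only [Set.mem_setOf_eq, sub_ne_zero]
      exact fun h => absurd h.symm (ne_of_lt this)
    have h3 : Tendsto (fun t => F t ^ α - 1) atTop (nhdsWithin 0 {x : ℝ | x ≠ 0}) :=
      tendsto_nhdsWithin_iff.mpr ⟨h1, hmem⟩
    exact tendsto_neg_atBot_atTop.comp (Real.tendsto_log_nhdsNE_zero.comp h3)
  refine ⟨hnn, ?_, ?_⟩
  · -- part 2
    have heq : ∀ᶠ x in nhdsWithin (0:ℝ) (Set.Ioi 0),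
        (∫ t in x..a, genRAI F f α t / t) = g a - g x := by
      filter_upwards [self_mem_nhdsWithin] with x hx
      exact hftc x a hx ha
    apply Tendsto.congr' (heq.mono fun x h => h.symm)
    exact tendsto_atTop_add_const_left _ _ (tendsto_neg_atBot_atTop.comp hgtop)
  · -- part 3
    have heq : ∀ᶠ x in (atTop : Filter ℝ),
        (∫ t in a..x, genRAI F f α t / t) = g x - g a := by
      filter_upwards [eventually_gt_atTop 0] with x hx
      exact hftc a x ha hx
    apply Tendsto.congr' (heq.mono fun x h => h.symm)
    exact tendsto_atTop_add_const_right _ _ hgbot
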